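/- Every nonempty rich word w admits a factorization w = w_p w_{p-1} ⋯ w_2 w_1 into distinct nonempty palindromes such that, for each i, w_i is the longest palindromic suffix of w_p w_{p-1} ⋯ w_i. -/

import Mathlib

/-- A word is rich if it has exactly `length + 1` distinct palindromic factors. -/
def Rich {A : Type*} (u : List A) : Prop :=
  {v : List A | v <:+: u ∧ v.reverse = v}.ncard = u.length + 1

/-- `UPSFactorization l w` : `l = [w_p, …, w_1]` is a factorization of `w` into distinct
nonempty palindromes such that each `w_i` is the longest palindromic suffix of `w_p ⋯ w_i`. -/
def UPSFactorization {A : Type*} (l : List (List A)) (w : List A) : Prop :=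
  l.flatten = w ∧ [] ∉ l ∧ l.Nodup ∧
  (∀ i : Fin l.length, (l.get i).reverse = l.get i) ∧
  ∀ i : Fin l.length, ∀ v : List A,
    v <:+ (l.take (i + 1)).flatten → v.reverse = v → v.length ≤ (l.get i).length


open List

/-- The set of palindromic factors of a word. -/
def Pals {A : Type*} (u : List A) : Set (List A) :=
  {v : List A | v <:+: u ∧ v.reverse = v}

lemma pals_finite {A : Type*} (u : List A) : (Pals u).Finite := by
  apply Set.Finite.subset u.sublists.finite_toSet
  intro v hv
  simpa [List.mem_sublists] using hv.1.sublist

lemma pal_of_length_le_one {A : Type*} {v : List A} (h : v.length ≤ 1) :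
    v.reverse = v := by
  interval_cases h' : v.length
  · simp [List.length_eq_zero_iff.mp h']
  · obtain ⟨a, rfl⟩ := List.length_eq_one_iff.mp h'
    rfl

/-- Existence of a longest palindromic suffix of a nonempty word. -/
lemma exists_maxPalSuffix {A : Type*} (w : List A) (hne : w ≠ []) :
    ∃ s : List A, s <:+ w ∧ s ≠ [] ∧ s.reverse = s ∧
      ∀ v : List A, v <:+ w → v.reverse = v → v.length ≤ s.length := by
  classical
  have hlen : 0 < w.length := List.length_pos_iff.mpr hne
  have hex : ∃ i, (w.drop i).reverse = w.drop i ∧ i < w.length := by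
    refine ⟨w.length - 1, pal_of_length_le_one ?_, by omega⟩
    simp only [List.length_drop]; omega
  obtain ⟨hpal, hi0⟩ := Nat.find_spec hex
  refine ⟨w.drop (Nat.find hex), List.drop_suffix _ _, ?_, hpal, ?_⟩
  · intro h
    have := congrArg List.length h
    simp only [List.length_drop, List.length_nil] at this
    omega
  · intro v hv hvpal
    by_contra hlt
    push_neg at hlt
    have hvd : v = w.drop (w.length - v.length) := List.suffix_iff_eq_drop.mp hv
    have hvlen : v.length ≤ w.length := hv.length_le
    have hsl : (w.drop (Nat.find hex)).length = w.length - Nat.find hex :=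
      List.length_drop
    have hvne : 0 < v.length := by
      rcases Nat.eq_zero_or_pos v.length with h | h
      · rw [h] at hlt; omega
      · exact h
    have hj : w.length - v.length < Nat.find hex := by omega
    exact Nat.find_min hex hj ⟨by rw [← hvd]; exact hvpal, by omega⟩

/-- One-step: palindromic factors of `u ++ [a]` are palindromic factors of `u`
or the longest palindromic suffix. -/
lemma pals_concat_subset {A : Type*} (u : List A) (a : A) (s : List A)
    (hs : s <:+ u ++ [a]) (hspal : s.reverse = s)
    (hmax : ∀ v : List A, v <:+ u ++ [a] → v.reverse = v → v.length ≤ s.length) :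
    Pals (u ++ [a]) ⊆ Pals u ∪ {s} := by
  rintro v ⟨⟨r, t, hw⟩, hvpal⟩
  have key : ∀ x : List A, x <+: u ++ [a] → x.length ≤ u.length → x <+: u := fun x hx hxl =>
    List.prefix_of_prefix_length_le hx (u.prefix_append [a]) (by simpa using hxl)
  by_cases ht : t = []
  · -- v is a suffix of u ++ [a]
    subst ht
    rw [List.append_nil] at hw
    have hvsuf : v <:+ u ++ [a] := ⟨r, hw⟩
    by_cases hvs : v = s
    · exact Or.inr (by simp [hvs])
    left
    have hvle : v.length ≤ s.length := hmax v hvsuf hvpal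
    have hvsufs : v <:+ s := by
      rw [← List.reverse_prefix] at hvsuf hs ⊢
      exact List.prefix_of_prefix_length_le hvsuf hs (by simpa using hvle)
    have hvlt : v.length < s.length := by
      rcases Nat.lt_or_ge v.length s.length with h | h
      · exact h
      · exact absurd (hvsufs.eq_of_length (le_antisymm hvle h)) hvs
    have hvpre : v <+: s := by
      have := List.reverse_prefix.mpr hvsufs
      rwa [hvpal, hspal] at this
    obtain ⟨t', ht'⟩ := hvpre
    obtain ⟨r', hr'⟩ := hs
    have hlenr : r'.length + s.length = u.length + 1 := by
      have := congrArg List.length hr'; simpa using this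
    have hpre : r' ++ v <+: u := by
      apply key
      · exact ⟨t', by rw [List.append_assoc, ht', hr']⟩
      · simp only [List.length_append]; omega
    refine ⟨(List.suffix_append r' v).isInfix.trans hpre.isInfix, hvpal⟩
  · -- v occurs strictly inside, hence in u
    left
    have htlen : 0 < t.length := List.length_pos_iff.mpr ht
    have hlens : r.length + v.length + t.length = u.length + 1 := by
      have := congrArg List.length hw; simp at this; omega
    have hpre : r ++ v <+: u := by
      apply key
      · exact ⟨t, hw⟩
      · simp only [List.length_append]; omega
    exact ⟨(List.suffix_append r v).isInfix.trans hpre.isInfix, hvpal⟩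

lemma pals_nil {A : Type*} : Pals ([] : List A) = {[]} := by
  ext v
  simp only [Pals, Set.mem_setOf_eq, Set.mem_singleton_iff, List.infix_nil]
  constructor
  · rintro ⟨rfl, -⟩; rfl
  · rintro rfl; exact ⟨rfl, rfl⟩

lemma pals_ncard_le {A : Type*} (u : List A) : (Pals u).ncard ≤ u.length + 1 := by
  induction u using List.reverseRecOn with
  | nil => simp [pals_nil]
  | append_singleton u a ih =>
    obtain ⟨s, hs, -, hspal, hmax⟩ := exists_maxPalSuffix (u ++ [a]) (by simp)
    have hsub := pals_concat_subset u a s hs hspal hmax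
    calc (Pals (u ++ [a])).ncard ≤ (Pals u ∪ {s}).ncard :=
          Set.ncard_le_ncard hsub ((pals_finite u).union (Set.finite_singleton s))
      _ ≤ (Pals u).ncard + ({s} : Set (List A)).ncard := Set.ncard_union_le _ _
      _ ≤ u.length + 1 + 1 := by
          have : ({s} : Set (List A)).ncard = 1 := Set.ncard_singleton s
          omega
      _ = (u ++ [a]).length + 1 := by simp

lemma rich_iff {A : Type*} (u : List A) : Rich u ↔ (Pals u).ncard = u.length + 1 :=
  Iff.rfl

lemma rich_concat {A : Type*} {u : List A} {a : A} {s : List A} (hrich : Rich (u ++ [a]))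
    (hs : s <:+ u ++ [a]) (hspal : s.reverse = s)
    (hmax : ∀ v : List A, v <:+ u ++ [a] → v.reverse = v → v.length ≤ s.length) :
    Rich u ∧ s ∉ Pals u := by
  have hsub := pals_concat_subset u a s hs hspal hmax
  have h1 : (Pals (u ++ [a])).ncard = u.length + 2 := by
    have := (rich_iff (u ++ [a])).mp hrich
    simpa using this
  have h2 : u.length + 2 ≤ (Pals u ∪ {s}).ncard := by
    rw [← h1]
    exact Set.ncard_le_ncard hsub ((pals_finite u).union (Set.finite_singleton s))
  have hns : s ∉ Pals u := by
    intro hsin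
    have : Pals u ∪ {s} = Pals u := by
      apply Set.union_eq_self_of_subset_right
      simpa using hsin
    rw [this] at h2
    have := pals_ncard_le u
    omega
  have h3 : (Pals u ∪ {s}).ncard ≤ (Pals u).ncard + 1 := by
    have := Set.ncard_union_le (Pals u) ({s} : Set (List A))
    simpa using this
  have := pals_ncard_le u
  exact ⟨by rw [rich_iff]; omega, hns⟩

lemma rich_prefix {A : Type*} : ∀ {w u : List A}, Rich w → u <+: w → Rich u := by
  intro w
  induction w using List.reverseRecOn with
  | nil => intro u h hp; rwa [List.prefix_nil.mp hp]
  | append_singleton ys a ih =>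
    intro u h hp
    by_cases hlen : u.length ≤ ys.length
    · have hu : u <+: ys := List.prefix_of_prefix_length_le hp (ys.prefix_append [a]) hlen
      obtain ⟨s, hs, -, hspal, hmax⟩ := exists_maxPalSuffix (ys ++ [a]) (by simp)
      exact ih (rich_concat h hs hspal hmax).1 hu
    · have : u = ys ++ [a] := by
        apply hp.eq_of_length
        have := hp.length_le
        simp only [List.length_append, List.length_cons, List.length_nil] at this ⊢
        omega
      rwa [this]

lemma main_aux {A : Type*} : ∀ n : ℕ, ∀ w : List A, w.length ≤ n → Rich w → w ≠ [] →
    ∃ l : List (List A), l ≠ [] ∧ UPSFactorization l w := by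
  intro n
  induction n with
  | zero =>
    intro w hlen _ hne
    exact absurd (List.length_eq_zero_iff.mp (Nat.le_zero.mp hlen)) hne
  | succ n ih =>
    intro w hlen hw hne
    obtain ⟨s, hs, hsne, hspal, hmax⟩ := exists_maxPalSuffix w hne
    obtain ⟨u, hu⟩ := hs
    have hwl : 0 < w.length := List.length_pos_iff.mpr hne
    have hsl : 0 < s.length := List.length_pos_iff.mpr hsne
    have hul : u.length + s.length = w.length := by
      have := congrArg List.length hu; simpa using this
    have hdrop : w.dropLast ++ [w.getLast hne] = w := List.dropLast_append_getLast hne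
    have hstep := rich_concat (u := w.dropLast) (a := w.getLast hne) (s := s)
        (by rw [hdrop]; exact hw) (by rw [hdrop]; exact ⟨u, hu⟩) hspal
        (by rw [hdrop]; exact hmax)
    have hsnot : s ∉ Pals w.dropLast := hstep.2
    -- the prefix u is rich; factor it
    have hIH : ∃ l' : List (List A), UPSFactorization l' u := by
      by_cases hu0 : u = []
      · subst hu0
        exact ⟨[], rfl, by simp, List.nodup_nil, fun i => i.elim0, fun i => i.elim0⟩
      · have hul' : u.length ≤ n := by omega
        obtain ⟨l', -, hl'⟩ := ih u hul' (rich_prefix hw ⟨s, hu⟩) hu0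
        exact ⟨l', hl'⟩
    obtain ⟨l', hflat, hnil, hnodup, hpal, hlong⟩ := hIH
    -- u is a prefix of w.dropLast
    have hupre : u <+: w.dropLast := by
      apply List.prefix_of_prefix_length_le ⟨s, hu⟩ (List.dropLast_prefix w)
      rw [List.length_dropLast]; omega
    have hsnl : s ∉ l' := by
      intro hmem
      apply hsnot
      exact ⟨(hflat ▸ List.infix_of_mem_flatten hmem).trans hupre.isInfix, hspal⟩
    have hflatall : (l' ++ [s]).flatten = w := by
      rw [List.flatten_append, hflat]; simpa using hu
    refine ⟨l' ++ [s], by simp, hflatall, ?_, ?_, ?_, ?_⟩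
    · intro h
      rcases List.mem_append.mp h with h | h
      · exact hnil h
      · exact hsne (List.mem_singleton.mp h).symm
    · exact List.nodup_append'.mpr ⟨hnodup, List.nodup_singleton s,
        by intro x hx hx'; exact hsnl ((List.mem_singleton.mp hx') ▸ hx)⟩
    · have hmem : ∀ x ∈ l' ++ [s], x.reverse = x := by
        intro x hx
        rcases List.mem_append.mp hx with h | h
        · obtain ⟨i, rfl⟩ := List.mem_iff_get.mp h
          exact hpal i
        · rw [List.mem_singleton.mp h]; exact hspal
      intro i
      exact hmem _ (List.get_mem _ _)
    · intro i v hv hvpal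
      have hilen : (i : ℕ) < l'.length + 1 := by
        have := i.isLt; simpa using this
      rcases Nat.lt_or_ge (i : ℕ) l'.length with h | h
      · have htake : (l' ++ [s]).take ((i : ℕ) + 1) = l'.take ((i : ℕ) + 1) :=
          List.take_append_of_le_length (by omega)
        have hget : (l' ++ [s]).get i = l'.get ⟨(i : ℕ), h⟩ := by
          simp [List.get_eq_getElem, List.getElem_append_left h]
        rw [htake] at hv
        rw [hget]
        exact hlong ⟨(i : ℕ), h⟩ v hv hvpal
      · have hieq : (i : ℕ) = l'.length := by omega
        have htake : (l' ++ [s]).take ((i : ℕ) + 1) = l' ++ [s] := by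
          apply List.take_of_length_le
          simp [hieq]
        rw [htake, hflatall] at hv
        have hget : (l' ++ [s]).get i = s := by
          rw [List.get_eq_getElem]
          exact List.getElem_concat_length hieq _
        rw [hget]
        exact hmax v hv hvpal

theorem exists_UPSFactorization {A : Type*} (w : List A) (hw : Rich w) (hne : w ≠ []) :
    ∃ l : List (List A), l ≠ [] ∧ UPSFactorization l w :=
  main_aux w.length w le_rfl hw hne
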